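/- Elements of SO(2,ℝ) are exactly the Frobenius-norm minimizers in SL(2,ℝ): for every 2×2 real matrix A with det A = 1 one has |A|² ≥ 2, and equality |A|² = 2 holds if and only if A ∈ SO(2,ℝ). Consequently min{|A|² : A ∈ SL(2,ℝ)} = 2 and SO(2,ℝ) = {A ∈ SL(2,ℝ) : |A|² = 2}. -/
import Mathlib


open Matrix

noncomputable section

/-- `M²`: the space of 2×2 real matrices. -/
abbrev M2 : Type := Matrix (Fin 2) (Fin 2) ℝ

/-- Frobenius inner product `⟨A,B⟩ = tr(AᵀB)`. -/
def mip (A B : M2) : ℝ := (Aᵀ * B).trace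

/-- Frobenius norm `|A| = ⟨A,A⟩^{1/2}`. -/
def fnorm (A : M2) : ℝ := Real.sqrt (mip A A)

/-- The matrix Z = [[0,−1],[1,0]]. -/
def Zm : M2 := !![0, -1; 1, 0]

/-- The matrix K = [[1,0],[0,−1]]. -/
def Km : M2 := !![1, 0; 0, -1]

/-- The matrix M = [[0,1],[1,0]]. -/
def Mm : M2 := !![0, 1; 1, 0]

/-- Cofactor: cof [[a,b],[c,d]] = [[d,−c],[−b,a]]. -/
def cofm (A : M2) : M2 := !![A 1 1, -(A 1 0); -(A 0 1), A 0 0]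

/-- Membership in SO(2,ℝ). -/
def isSO (U : M2) : Prop := U.det = 1 ∧ U⁻¹ = Uᵀ

/-- The rotation U(θ) = cos θ·I + sin θ·Z. -/
def Um (θ : ℝ) : M2 := Real.cos θ • (1 : M2) + Real.sin θ • Zm

/-- Invariant X₁(A,B) = ½|B|² + (κ/2)|A|². -/
def X1 (κ : ℝ) (A B : M2) : ℝ := (1/2) * mip B B + (κ/2) * mip A A

/-- Invariant X₂(A,B) = ½⟨ZA − AZ, B⟩. -/
def X2 (A B : M2) : ℝ := (1/2) * mip (Zm * A - A * Zm) B

/-- Invariant X₃(A,B) = ½⟨ZA + AZ, B⟩. -/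
def X3 (A B : M2) : ℝ := (1/2) * mip (Zm * A + A * Zm) B

/-- Lagrange multiplier Λ(A,B) = 2(κ − det B)/|A|². -/
def Lam (κ : ℝ) (A B : M2) : ℝ := 2 * (κ - B.det) / (mip A A)

attribute [local instance] Matrix.normedAddCommGroup Matrix.normedSpace

lemma mip_self (A : M2) : mip A A = A 0 0 ^ 2 + A 0 1 ^ 2 + A 1 0 ^ 2 + A 1 1 ^ 2 := by
  simp [mip, Matrix.trace_fin_two, Matrix.mul_apply, Fin.sum_univ_two, Matrix.transpose_apply]
  ring

lemma main_min (A : M2) (h : A.det = 1) : 2 ≤ mip A A ∧ (mip A A = 2 ↔ isSO A) := by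
  have hd : A 0 0 * A 1 1 - A 0 1 * A 1 0 = 1 := by
    rw [Matrix.det_fin_two] at h; linarith
  have key : mip A A - 2 = (A 0 0 - A 1 1)^2 + (A 0 1 + A 1 0)^2 := by
    rw [mip_self]; nlinarith [hd]
  constructor
  · nlinarith [sq_nonneg (A 0 0 - A 1 1), sq_nonneg (A 0 1 + A 1 0)]
  constructor
  · intro h2
    have e1 : A 0 0 = A 1 1 := by nlinarith [sq_nonneg (A 0 0 - A 1 1), sq_nonneg (A 0 1 + A 1 0)]
    have e2 : A 0 1 = -(A 1 0) := by nlinarith [sq_nonneg (A 0 0 - A 1 1), sq_nonneg (A 0 1 + A 1 0)]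
    refine ⟨h, ?_⟩
    rw [Matrix.inv_def, h, Matrix.adjugate_fin_two]
    ext i j
    fin_cases i <;> fin_cases j <;>
      simp [Matrix.transpose_apply, e1, e2]
  · rintro ⟨hdet, hinv⟩
    have hAinv : IsUnit A.det := by rw [hdet]; exact isUnit_one
    have : Aᵀ * A = 1 := by rw [← hinv]; exact Matrix.nonsing_inv_mul A hAinv
    simp [mip, this, Matrix.trace_one]

/-- Elements of SO(2,ℝ) are exactly the Frobenius-norm minimizers in SL(2,ℝ). -/
theorem so2_norm_minimizers :
    (∀ A : M2, A.det = 1 → 2 ≤ mip A A ∧ (mip A A = 2 ↔ isSO A)) ∧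
    IsLeast {r : ℝ | ∃ A : M2, A.det = 1 ∧ r = mip A A} 2 ∧
    {U : M2 | isSO U} = {A : M2 | A.det = 1 ∧ mip A A = 2} := by
  refine ⟨main_min, ⟨⟨1, by simp, ?_⟩, ?_⟩, ?_⟩
  · simp [mip_self]; norm_num
  · rintro r ⟨A, hA, rfl⟩; exact (main_min A hA).1
  · ext A
    simp only [Set.mem_setOf_eq]
    constructor
    · intro hA
      exact ⟨hA.1, ((main_min A hA.1).2).mpr hA⟩
    · rintro ⟨h1, h2⟩
      exact ((main_min A h1).2).mp h2
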